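/- Let K be a field and let E_1, E_2 be finite-dimensional K-vector spaces equipped with weight functions w_1, w_2 respectively. Then there exists a weight function w on the tensor product E_1 ⊗_K E_2 such that w(e_1 ⊗ e_2) = w_1(e_1) + w_2(e_2) for all e_1 ∈ E_1 and e_2 ∈ E_2 (with the convention that a sum involving −∞ equals −∞). -/

import Mathlib

/-- A weight function on a `K`-vector space `E` is a map `w : E → ℝ ∪ {−∞}` such that
(1) `w x = −∞` iff `x = 0`; (2) `w (t • x) = w x` for all nonzero `t : K`;
(3) `w (x + y) ≤ max (w x) (w y)`. -/
def IsWeightFunction (K : Type*) [Field K] {E : Type*} [AddCommGroup E] [Module K E]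
    (w : E → WithBot ℝ) : Prop :=
  (∀ x : E, w x = ⊥ ↔ x = 0) ∧
  (∀ (t : K) (x : E), t ≠ 0 → w (t • x) = w x) ∧
  (∀ x y : E, w (x + y) ≤ max (w x) (w y))

section Aux

variable {K : Type*} [Field K]

lemma weight_zero {E : Type*} [AddCommGroup E] [Module K E] {w : E → WithBot ℝ}
    (hw : IsWeightFunction K w) : w 0 = ⊥ := (hw.1 0).mpr rfl

lemma weight_sum_le {E : Type*} [AddCommGroup E] [Module K E] {w : E → WithBot ℝ}
    (hw : IsWeightFunction K w) {α : Type*} (s : Finset α) (g : α → E) :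
    w (∑ p ∈ s, g p) ≤ s.sup (fun p => w (g p)) := by
  induction s using Finset.cons_induction with
  | empty => simp [weight_zero hw]
  | cons a s ha ih =>
    rw [Finset.sum_cons, Finset.sup_cons]
    exact le_trans (hw.2.2 _ _) (max_le_max le_rfl ih)

/-- The sublevel set `{x | w x ≤ c}` is a submodule. -/
def sublevelLE {E : Type*} [AddCommGroup E] [Module K E] (w : E → WithBot ℝ)
    (hw : IsWeightFunction K w) (c : WithBot ℝ) : Submodule K E where
  carrier := {x | w x ≤ c}
  zero_mem' := by simp [weight_zero hw]
  add_mem' := fun hx hy => le_trans (hw.2.2 _ _) (max_le hx hy)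
  smul_mem' := by
    intro t x hx
    by_cases ht : t = 0
    · simp [ht, weight_zero hw]
    · simpa [hw.2.1 t x ht] using hx

/-- The strict sublevel set `{x | w x < c}` is a submodule. -/
def sublevelLT {E : Type*} [AddCommGroup E] [Module K E] (w : E → WithBot ℝ)
    (hw : IsWeightFunction K w) (c : WithBot ℝ) (hc : ⊥ < c) : Submodule K E where
  carrier := {x | w x < c}
  zero_mem' := by simpa only [Set.mem_setOf_eq, weight_zero hw] using hc
  add_mem' := fun hx hy => lt_of_le_of_lt (hw.2.2 _ _) (max_lt hx hy)
  smul_mem' := by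
    intro t x hx
    by_cases ht : t = 0
    · simpa only [ht, zero_smul, Set.mem_setOf_eq, weight_zero hw] using hc
    · simpa [hw.2.1 t x ht] using hx

lemma weight_le_sup_support {E : Type*} [AddCommGroup E] [Module K E] {w : E → WithBot ℝ}
    (hw : IsWeightFunction K w) {ι : Type*} [Fintype ι] (b : Module.Basis ι K E)
    (x : E) : w x ≤ (b.repr x).support.sup (fun i => w (b i)) := by
  conv_lhs => rw [← b.sum_repr x]
  refine le_trans (weight_sum_le hw _ _) (Finset.sup_le ?_)
  intro i _
  by_cases h : b.repr x i = 0
  · simp [h, weight_zero hw]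
  · rw [hw.2.1 _ _ h]
    exact Finset.le_sup (f := fun i => w (b i)) (Finsupp.mem_support_iff.mpr h)

end Aux

section Adapted

variable {K : Type*} [Field K]

universe u

lemma adapted_of_subsingleton {E : Type u} [AddCommGroup E] [Module K E] [Subsingleton E]
    (w : E → WithBot ℝ) (hw : IsWeightFunction K w) :
    ∃ (ι : Type) (_ : Fintype ι) (b : Module.Basis ι K E),
      ∀ x : E, w x = (b.repr x).support.sup (fun i => w (b i)) := by
  refine ⟨Fin 0, inferInstance, Module.Basis.empty E, fun x => ?_⟩
  have hx : x = 0 := Subsingleton.elim x 0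
  rw [hx, weight_zero hw, map_zero]
  simp

lemma exists_adapted_basis_aux (n : ℕ) :
    ∀ {E : Type u} [AddCommGroup E] [Module K E] [FiniteDimensional K E]
      (w : E → WithBot ℝ), IsWeightFunction K w → Module.finrank K E ≤ n →
      ∃ (ι : Type) (_ : Fintype ι) (b : Module.Basis ι K E),
        ∀ x : E, w x = (b.repr x).support.sup (fun i => w (b i)) := by
  induction n with
  | zero =>
    intro E _ _ _ w hw hn
    have : Module.finrank K E = 0 := Nat.le_zero.mp hn
    haveI : Subsingleton E := Module.finrank_zero_iff.mp this
    exact adapted_of_subsingleton w hw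
  | succ n ih =>
    intro E _ _ _ w hw hn
    rcases subsingleton_or_nontrivial E with hE | hE
    · exact adapted_of_subsingleton w hw
    -- the range of w is finite
    have hr : ∀ c c', c ∈ Set.range w → c' ∈ Set.range w → c < c' →
        Module.finrank K (sublevelLE w hw c) < Module.finrank K (sublevelLE w hw c') := by
      rintro c c' _ ⟨x', rfl⟩ hlt
      refine Submodule.finrank_lt_finrank_of_lt (SetLike.lt_iff_le_and_exists.mpr
        ⟨fun x hx => le_trans hx hlt.le, x', le_refl (w x'), not_le.mpr hlt⟩)
    have hfin : (Set.range w).Finite := by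
      have hinj : Set.InjOn (fun c => Module.finrank K (sublevelLE w hw c)) (Set.range w) := by
        intro c hc c' hc' h
        by_contra hne
        rcases lt_or_gt_of_ne hne with hlt | hlt
        · exact absurd h (ne_of_lt (hr c c' hc hc' hlt))
        · exact absurd h.symm (ne_of_lt (hr c' c hc' hc hlt))
      refine Set.Finite.of_finite_image ?_ hinj
      refine Set.Finite.subset (Set.finite_Iic (Module.finrank K E)) ?_
      rintro _ ⟨c, hc, rfl⟩
      exact Submodule.finrank_le _
    obtain ⟨c₁, ⟨x₁, hx₁⟩, hmax⟩ := Set.exists_max_image (Set.range w) id hfin ⟨w 0, 0, rfl⟩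
    have hmax' : ∀ y, w y ≤ c₁ := fun y => hmax _ ⟨y, rfl⟩
    obtain ⟨y₀, hy₀⟩ := exists_ne (0 : E)
    have hbot : ⊥ < c₁ :=
      lt_of_lt_of_le (by rw [bot_lt_iff_ne_bot, Ne, hw.1]; exact hy₀) (hmax' y₀)
    set V₂ := sublevelLT w hw c₁ hbot with hV₂
    have hw' : IsWeightFunction K (fun v : V₂ => w (v : E)) := by
      refine ⟨fun v => (hw.1 _).trans Submodule.coe_eq_zero, fun t v ht => ?_, fun v u => ?_⟩
      · show w ((t • v : V₂) : E) = w (v : E)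
        rw [Submodule.coe_smul]
        exact hw.2.1 _ _ ht
      · show w ((v + u : V₂) : E) ≤ _
        rw [Submodule.coe_add]
        exact hw.2.2 _ _
    have hx₁mem : x₁ ∉ V₂ := fun h =>
      absurd (show w x₁ < c₁ from h) (by rw [hx₁]; exact lt_irrefl _)
    have hVtop : V₂ ≠ ⊤ := by
      intro h
      exact hx₁mem (h ▸ Submodule.mem_top)
    have hVlt : Module.finrank K V₂ ≤ n := by
      have h1 : Module.finrank K V₂ < Module.finrank K E :=
        Submodule.finrank_lt hVtop
      omega
    obtain ⟨ι₁, _, b', hb'⟩ := ih (fun v : V₂ => w (v : E)) hw' hVlt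
    obtain ⟨W, hWc⟩ := Submodule.exists_isCompl V₂
    let bw : Module.Basis (Fin (Module.finrank K W)) K W := Module.finBasis K W
    set φ := Submodule.prodEquivOfIsCompl V₂ W hWc with hφ
    let B : Module.Basis (ι₁ ⊕ Fin (Module.finrank K W)) K E := (b'.prod bw).map φ
    have hreprl : ∀ (y : E) i, B.repr y (Sum.inl i) = b'.repr (φ.symm y).1 i := fun y i =>
      Module.Basis.prod_repr_inl b' bw (φ.symm y) i
    have hreprr : ∀ (y : E) j, B.repr y (Sum.inr j) = bw.repr (φ.symm y).2 j := fun y j =>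
      Module.Basis.prod_repr_inr b' bw (φ.symm y) j
    refine ⟨ι₁ ⊕ Fin (Module.finrank K W), inferInstance, B, fun x => ?_⟩
    refine le_antisymm (weight_le_sup_support hw B x) ?_
    have hx : ((φ.symm x).1 : E) + ((φ.symm x).2 : E) = x := by
      have h : φ (φ.symm x) = ((φ.symm x).1 : E) + ((φ.symm x).2 : E) := rfl
      rw [φ.apply_symm_apply] at h
      exact h.symm
    by_cases hu : (φ.symm x).2 = 0
    · have hxv : x = ((φ.symm x).1 : E) := by
        rw [hu] at hx
        simpa using hx.symm
      refine Finset.sup_le ?_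
      rintro (i | j) hp
      · rw [Finsupp.mem_support_iff, hreprl] at hp
        have hBi : B (Sum.inl i) = ((b' i : V₂) : E) := by
          have h5 : φ (b'.prod bw (Sum.inl i)) =
              ((b'.prod bw (Sum.inl i)).1 : E) + ((b'.prod bw (Sum.inl i)).2 : E) := rfl
          show φ (b'.prod bw (Sum.inl i)) = _
          rw [h5, Module.Basis.prod_apply_inl_fst, Module.Basis.prod_apply_inl_snd]
          simp
        have h2 : w (((φ.symm x).1 : V₂) : E) =
            (b'.repr (φ.symm x).1).support.sup (fun i => w ((b' i : V₂) : E)) :=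
          hb' (φ.symm x).1
        rw [hBi, hxv, h2]
        exact Finset.le_sup (f := fun i => w ((b' i : V₂) : E)) (Finsupp.mem_support_iff.mpr hp)
      · rw [Finsupp.mem_support_iff, hreprr, hu] at hp
        simp at hp
    · have hwx : w x = c₁ := by
        refine le_antisymm (hmax' x) ?_
        by_contra hcon
        rw [not_le] at hcon
        have hxV : x ∈ V₂ := hcon
        have h2 : ((φ.symm x).2 : E) ∈ V₂ := by
          have h3 : ((φ.symm x).2 : E) = x - ((φ.symm x).1 : E) := by
            rw [eq_sub_iff_add_eq, add_comm]
            exact hx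
          rw [h3]
          exact Submodule.sub_mem _ hxV (Submodule.coe_mem _)
        have h4 := Submodule.disjoint_def.mp hWc.disjoint _ h2 (Submodule.coe_mem _)
        exact hu (Submodule.coe_eq_zero.mp h4)
      rw [hwx]
      exact Finset.sup_le (fun p _ => hmax' (B p))

lemma exists_adapted_basis {E : Type u} [AddCommGroup E] [Module K E] [FiniteDimensional K E]
    (w : E → WithBot ℝ) (hw : IsWeightFunction K w) :
    ∃ (ι : Type) (_ : Fintype ι) (b : Module.Basis ι K E),
      ∀ x : E, w x = (b.repr x).support.sup (fun i => w (b i)) :=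
  exists_adapted_basis_aux (Module.finrank K E) w hw le_rfl

end Adapted

lemma sup_add_prod {α β : Type*} (s : Finset α) (t : Finset β)
    (f : α → WithBot ℝ) (g : β → WithBot ℝ) :
    (s ×ˢ t).sup (fun p => f p.1 + g p.2) = s.sup f + t.sup g := by
  rcases s.eq_empty_or_nonempty with hs | hs
  · simp [hs]
  rcases t.eq_empty_or_nonempty with ht | ht
  · simp [ht]
  obtain ⟨i₀, hi₀, hf⟩ := Finset.exists_mem_eq_sup s hs f
  obtain ⟨j₀, hj₀, hg⟩ := Finset.exists_mem_eq_sup t ht g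
  refine le_antisymm (Finset.sup_le ?_) ?_
  · rintro ⟨i, j⟩ hij
    rw [Finset.mem_product] at hij
    exact add_le_add (Finset.le_sup hij.1) (Finset.le_sup hij.2)
  · rw [hf, hg]
    exact Finset.le_sup (f := fun p => f p.1 + g p.2) (b := (i₀, j₀))
      (Finset.mem_product.mpr ⟨hi₀, hj₀⟩)

open TensorProduct in
/-- If `w₁, w₂` are weight functions on finite-dimensional spaces `E₁, E₂`, then there
is a weight function `w` on `E₁ ⊗ E₂` with `w (e₁ ⊗ e₂) = w₁ e₁ + w₂ e₂` on pure
tensors (in `ℝ ∪ {−∞}`, where a sum involving `−∞` is `−∞`). -/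
theorem tensor_product_weight_function (K : Type*) [Field K] (E₁ E₂ : Type*)
    [AddCommGroup E₁] [Module K E₁] [AddCommGroup E₂] [Module K E₂]
    [FiniteDimensional K E₁] [FiniteDimensional K E₂]
    (w₁ : E₁ → WithBot ℝ) (w₂ : E₂ → WithBot ℝ)
    (hw₁ : IsWeightFunction K w₁) (hw₂ : IsWeightFunction K w₂) :
    ∃ w : E₁ ⊗[K] E₂ → WithBot ℝ, IsWeightFunction K w ∧
      ∀ (e₁ : E₁) (e₂ : E₂), w (e₁ ⊗ₜ[K] e₂) = w₁ e₁ + w₂ e₂ := by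
  classical
  obtain ⟨ι₁, _, b₁, hb₁⟩ := exists_adapted_basis w₁ hw₁
  obtain ⟨ι₂, _, b₂, hb₂⟩ := exists_adapted_basis w₂ hw₂
  let B := Module.Basis.tensorProduct b₁ b₂
  refine ⟨fun z => (B.repr z).support.sup (fun p => w₁ (b₁ p.1) + w₂ (b₂ p.2)),
    ⟨?_, ?_, ?_⟩, ?_⟩
  · intro z
    constructor
    · intro hz
      by_contra hz0
      have hne : B.repr z ≠ 0 := fun h => hz0 (by simpa using (B.repr.map_eq_zero_iff).mp h)
      obtain ⟨p, hp⟩ := Finsupp.support_nonempty_iff.mpr hne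
      have h1 : w₁ (b₁ p.1) + w₂ (b₂ p.2) ≤ ⊥ :=
        hz ▸ Finset.le_sup (f := fun p => w₁ (b₁ p.1) + w₂ (b₂ p.2)) hp
      rw [le_bot_iff, WithBot.add_eq_bot] at h1
      rcases h1 with h | h
      · exact b₁.ne_zero p.1 ((hw₁.1 _).mp h)
      · exact b₂.ne_zero p.2 ((hw₂.1 _).mp h)
    · intro hz
      show (B.repr z).support.sup _ = ⊥
      rw [hz]
      simp
  · intro t z ht
    have h : B.repr (t • z) = t • B.repr z := map_smul _ _ _
    show (B.repr (t • z)).support.sup (fun p => w₁ (b₁ p.1) + w₂ (b₂ p.2)) =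
      (B.repr z).support.sup (fun p => w₁ (b₁ p.1) + w₂ (b₂ p.2))
    rw [h, Finsupp.support_smul_eq ht]
  · intro x y
    have hsub : (B.repr (x + y)).support ⊆ (B.repr x).support ∪ (B.repr y).support := by
      rw [map_add]
      exact Finsupp.support_add
    refine le_trans (Finset.sup_mono hsub) ?_
    rw [Finset.sup_union]
  · intro e₁ e₂
    have hsupp : (B.repr (e₁ ⊗ₜ[K] e₂)).support =
        (b₁.repr e₁).support ×ˢ (b₂.repr e₂).support := by
      ext ⟨i, j⟩
      simp only [B, Finsupp.mem_support_iff, Finset.mem_product,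
        Module.Basis.tensorProduct_repr_tmul_apply, smul_eq_mul, ne_eq, mul_eq_zero, not_or]
      tauto
    have hprod := sup_add_prod (b₁.repr e₁).support (b₂.repr e₂).support
      (fun i => w₁ (b₁ i)) (fun j => w₂ (b₂ j))
    show (B.repr (e₁ ⊗ₜ[K] e₂)).support.sup (fun p => w₁ (b₁ p.1) + w₂ (b₂ p.2)) = _
    rw [hsupp, hprod, ← hb₁ e₁, ← hb₂ e₂]
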